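/- arXiv:1804.00728 — 5 statements merged into one kernel-verified Lean document; each statement's English description precedes it below -/
import Mathlib

section
/- For a finite group G, neither RP(G) nor RP*(G) is isomorphic to a cycle C_n for any n ≥ 3. -/
open SimpleGraph

/-- The reduced power graph of a group. -/
def redPowGraph (G : Type*) [Group G] : SimpleGraph G where
  Adj u v := Subgroup.zpowers u < Subgroup.zpowers v ∨ Subgroup.zpowers v < Subgroup.zpowers u
  symm := ⟨fun u v h => h.symm⟩
  loopless := ⟨fun u h => by cases h <;> simp_all⟩

/-- The proper reduced power graph: induced subgraph on the non-identity elements. -/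
def properRedPowGraph (G : Type*) [Group G] : SimpleGraph {x : G // x ≠ 1} :=
  SimpleGraph.comap Subtype.val (redPowGraph G)

/-- Ω(n): number of prime factors counted with multiplicity. -/
def bigOmega (n : ℕ) : ℕ := n.primeFactorsList.length

private lemma card_lt_of_lt {G : Type*} [Group G] [Fintype G] {H K : Subgroup G} (h : H < K) :
    Nat.card H < Nat.card K := by
  have hss : (H : Set G) ⊂ (K : Set G) := SetLike.coe_ssubset_coe.mpr h
  have := Set.ncard_lt_ncard hss (Set.toFinite _)
  rw [← Nat.card_coe_set_eq, ← Nat.card_coe_set_eq] at this; exact this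

private lemma helperB {G : Type*} [Group G] [Fintype G] {p q : G} (hp : p ≠ 1)
    (hq : q⁻¹ = q) (h : Subgroup.zpowers p < Subgroup.zpowers q) : False := by
  have h1 : 1 < Nat.card (Subgroup.zpowers p) :=
    (Subgroup.one_lt_card_iff_ne_bot _).mpr (Subgroup.zpowers_ne_bot.mpr hp)
  have h2 : Nat.card (Subgroup.zpowers p) < Nat.card (Subgroup.zpowers q) := card_lt_of_lt h
  have h3 : orderOf q ∣ 2 :=
    orderOf_dvd_of_pow_eq_one (by rw [pow_two]; nth_rewrite 1 [← hq]; exact inv_mul_cancel q)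
  have h4 : Nat.card (Subgroup.zpowers q) = orderOf q := Nat.card_zpowers q
  have h5 := Nat.le_of_dvd (by norm_num) h3
  omega

open Fin.NatCast Fin.CommRing in
private lemma cycle_twins {m : ℕ} {a b : Fin (m + 2)} (hab : a ≠ b)
    (h : ∀ c, (cycleGraph (m + 2)).Adj a c ↔ (cycleGraph (m + 2)).Adj b c) : (m + 2) ∣ 4 := by
  have h1 : (cycleGraph (m + 2)).Adj b (a + 1) := by
    rw [← h]; rw [cycleGraph_adj]; right; ring
  have h2 : (cycleGraph (m + 2)).Adj b (a - 1) := by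
    rw [← h]; rw [cycleGraph_adj]; left; ring
  rw [cycleGraph_adj] at h1 h2
  have hb1 : b = a + 2 := by
    rcases h1 with h1 | h1
    · linear_combination h1
    · exact absurd (by linear_combination -h1 : b = a) (Ne.symm hab)
  have hb2 : b = a - 2 := by
    rcases h2 with h2 | h2
    · exact absurd (by linear_combination h2 : b = a) (Ne.symm hab)
    · linear_combination -h2
  have h40 : ((4 : ℕ) : Fin (m + 2)) = 0 := by push_cast; linear_combination hb2 - hb1
  exact Fin.natCast_eq_zero.mp h40

private lemma iso_twins {V : Type*} {m : ℕ} {H : SimpleGraph V} (f : H ≃g cycleGraph (m + 2))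
    {x y : V} (hxy : x ≠ y) (h : ∀ z, H.Adj x z ↔ H.Adj y z) : (m + 2) ∣ 4 := by
  apply cycle_twins (a := f x) (b := f y) (fun he => hxy (f.toEquiv.injective he))
  intro c
  rw [← f.apply_symm_apply c, f.map_rel_iff, f.map_rel_iff]
  exact h _

open Fin.NatCast Fin.CommRing in
private lemma fin_nonadj {m : ℕ} (hm : 2 ≤ m) (a : Fin (m + 2)) :
    a + 2 ≠ a ∧ ¬ (cycleGraph (m + 2)).Adj a (a + 2) := by
  have h1 : ((1 : ℕ) : Fin (m + 2)) ≠ 0 := by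
    intro h; rw [Fin.natCast_eq_zero] at h
    have := Nat.le_of_dvd (by norm_num) h; omega
  have h2 : ((2 : ℕ) : Fin (m + 2)) ≠ 0 := by
    intro h; rw [Fin.natCast_eq_zero] at h
    have := Nat.le_of_dvd (by norm_num) h; omega
  have h3 : ((3 : ℕ) : Fin (m + 2)) ≠ 0 := by
    intro h; rw [Fin.natCast_eq_zero] at h
    have := Nat.le_of_dvd (by norm_num) h; omega
  constructor
  · intro h; apply h2; push_cast; linear_combination h
  · rw [cycleGraph_adj]; push_neg
    constructor
    · intro h; exact absurd (by push_cast; linear_combination -h) h3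
    · intro h; exact absurd (by push_cast; linear_combination h) h1

private lemma rpstar_aux {G : Type*} [Group G] [Fintype G] {m : ℕ} (hm1 : 1 ≤ m)
    (f : properRedPowGraph G ≃g cycleGraph (m + 2)) {p q : {x : G // x ≠ 1}}
    (hlt : Subgroup.zpowers (p : G) < Subgroup.zpowers (q : G)) : False := by
  have hq2 : (q : G)⁻¹ ≠ (q : G) := fun h => helperB p.2 h hlt
  have hdvd : (m + 2) ∣ 4 := by
    apply iso_twins f (x := q) (y := ⟨(q : G)⁻¹, inv_ne_one.mpr q.2⟩)
    · intro h; exact hq2 (congrArg Subtype.val h).symm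
    · intro z
      simp [properRedPowGraph, redPowGraph, Subgroup.zpowers_inv]
  have hm2 : m = 2 := by
    have h4 := Nat.le_of_dvd (by norm_num) hdvd
    have hub : m ≤ 2 := by omega
    interval_cases m <;> omega
  subst hm2
  have hG : Nat.card G = 5 := by
    have h1 : Nat.card {x : G // x ≠ 1} = 4 := by simpa using Nat.card_congr f.toEquiv
    have e : {x : G // x ≠ 1} ≃ ↥(({1} : Set G)ᶜ) :=
      Equiv.subtypeEquivRight (by intro x; simp)
    have h3 : Nat.card ↥(({1} : Set G)ᶜ) = 4 := by rw [← Nat.card_congr e]; exact h1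
    have h4 := Set.ncard_add_ncard_compl ({1} : Set G)
    rw [Nat.card_coe_set_eq] at h3
    have h5 : ({1} : Set G).ncard = 1 := Set.ncard_singleton 1
    omega
  have hplt : 1 < Nat.card (Subgroup.zpowers (p : G)) :=
    (Subgroup.one_lt_card_iff_ne_bot _).mpr (Subgroup.zpowers_ne_bot.mpr p.2)
  have hlt' : Nat.card (Subgroup.zpowers (p : G)) < Nat.card (Subgroup.zpowers (q : G)) :=
    card_lt_of_lt hlt
  have hdp : Nat.card (Subgroup.zpowers (p : G)) ∣ 5 := by
    have := Subgroup.card_subgroup_dvd_card (Subgroup.zpowers (p : G))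
    rwa [hG] at this
  have hdq : Nat.card (Subgroup.zpowers (q : G)) ∣ 5 := by
    have := Subgroup.card_subgroup_dvd_card (Subgroup.zpowers (q : G))
    rwa [hG] at this
  have h5q := Nat.le_of_dvd (by norm_num) hdq
  rcases Nat.Prime.eq_one_or_self_of_dvd (by norm_num) _ hdp with h | h <;> omega

/-- Neither RP(G) nor RP*(G) is isomorphic to a cycle Cₙ, n ≥ 3. -/
theorem stmt14 {G : Type*} [Group G] [Fintype G] :
    ∀ n : ℕ, 3 ≤ n →
      IsEmpty (redPowGraph G ≃g SimpleGraph.cycleGraph n) ∧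
      IsEmpty (properRedPowGraph G ≃g SimpleGraph.cycleGraph n) := by
  intro n hn
  obtain ⟨m, rfl⟩ : ∃ m, n = m + 2 := ⟨n - 2, by omega⟩
  have hm1 : 1 ≤ m := by omega
  constructor
  · constructor
    intro f
    rcases Nat.lt_or_ge m 2 with hm | hm
    · -- n = 3
      have hm' : m = 1 := by omega
      subst hm'
      have hcard : Fintype.card G = 3 := by simpa using Fintype.card_congr f.toEquiv
      have : Nontrivial G := Fintype.one_lt_card_iff_nontrivial.mp (by omega)
      obtain ⟨g, hg⟩ := exists_ne (1 : G)
      have hginv : g⁻¹ ≠ g := by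
        intro h
        have ho : orderOf g = 2 :=
          orderOf_eq_prime (by rw [pow_two]; nth_rewrite 1 [← h]; exact inv_mul_cancel g) hg
        have := orderOf_dvd_card (x := g)
        rw [ho, hcard] at this
        omega
      have hkey : ∀ a b : Fin 3, a ≠ b → (cycleGraph 3).Adj a b := by decide
      have hadj : (cycleGraph (1 + 2)).Adj (f g) (f g⁻¹) :=
        hkey _ _ fun h => hginv (f.toEquiv.injective h).symm
      have := f.map_rel_iff.mp hadj
      simp [redPowGraph, Subgroup.zpowers_inv] at this
    · -- n ≥ 4
      obtain ⟨hne, hnadj⟩ := fin_nonadj hm (f 1)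
      have hv1 : f.symm (f 1 + 2) ≠ 1 := by
        intro h
        apply hne
        have h2 := f.apply_symm_apply (f 1 + 2)
        rw [h] at h2
        exact h2.symm
      have hadj : (redPowGraph G).Adj 1 (f.symm (f 1 + 2)) :=
        Or.inl (by
          rw [Subgroup.zpowers_one_eq_bot]
          exact bot_lt_iff_ne_bot.mpr (Subgroup.zpowers_ne_bot.mpr hv1))
      apply hnadj
      have := f.map_rel_iff.mpr hadj
      rwa [f.apply_symm_apply] at this
  · constructor
    intro f
    have hadj01 : (cycleGraph (m + 2)).Adj 0 1 := by rw [cycleGraph_adj]; right; open Fin.CommRing in ring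
    have hE : (properRedPowGraph G).Adj (f.symm 0) (f.symm 1) := f.symm.map_rel_iff.mpr hadj01
    rcases hE with h | h
    · exact rpstar_aux hm1 f h
    · exact rpstar_aux hm1 f h
end

section
/- Let G be a finite group. If x ∈ G∖{e} is a cut vertex of RP*(G), then x has order 2. -/
open SimpleGraph

/-- A cut vertex: a vertex whose removal increases the number of connected components. -/
def IsCutVertex {V : Type*} (Γ : SimpleGraph V) (v : V) : Prop :=
  Nat.card Γ.ConnectedComponent < Nat.card (Γ.induce {u | u ≠ v}).ConnectedComponent

/-- If x is a cut vertex of RP*(G), then x has order 2. -/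
theorem stmt15 {G : Type*} [Group G] [Fintype G] (x : {x : G // x ≠ 1})
    (hx : IsCutVertex (properRedPowGraph G) x) : orderOf (x : G) = 2 := by
  classical
  by_contra hne
  set Γ := properRedPowGraph G with hΓ
  have hx1 : (x : G) ≠ 1 := x.2
  -- x⁻¹ ≠ x
  have h2 : (x : G)⁻¹ ≠ (x : G) := by
    intro h
    have hsq : (x : G) ^ 2 = 1 := by
      rw [pow_two]; exact mul_eq_one_iff_inv_eq.mpr h
    have hdvd : orderOf (x : G) ∣ 2 := orderOf_dvd_of_pow_eq_one hsq
    rcases (Nat.dvd_prime Nat.prime_two).mp hdvd with h1 | h1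
    · exact hx1 (orderOf_eq_one_iff.mp h1)
    · exact hne h1
  have hzp : Subgroup.zpowers ((x : G)⁻¹) = Subgroup.zpowers (x : G) := by
    ext g
    simp [Subgroup.mem_zpowers_iff]
  have hy1 : (x : G)⁻¹ ≠ 1 := inv_ne_one.mpr hx1
  set y : {x : G // x ≠ 1} := ⟨(x : G)⁻¹, hy1⟩ with hy
  have hyx : y ≠ x := fun h => h2 (congrArg Subtype.val h)
  -- the folding map sending x to y
  have hf : ∀ z : {x : G // x ≠ 1}, ∃ w : {u : {x : G // x ≠ 1} | u ≠ x},
      True := fun z => ⟨⟨y, hyx⟩, trivial⟩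
  let f : {x : G // x ≠ 1} → {u : {x : G // x ≠ 1} | u ≠ x} := fun z =>
    if h : z = x then ⟨y, hyx⟩ else ⟨z, h⟩
  have hfval : ∀ z : {x : G // x ≠ 1},
      Subgroup.zpowers ((f z : {x : G // x ≠ 1}) : G) = Subgroup.zpowers (z : G) := by
    intro z
    by_cases h : z = x
    · simp only [f, dif_pos h]
      rw [h]
      exact hzp
    · simp only [f, dif_neg h]
  have hfadj : ∀ u v, Γ.Adj u v → (Γ.induce {u | u ≠ x}).Adj (f u) (f v) := by
    intro u v huv
    have : (redPowGraph G).Adj (u : G) (v : G) := huv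
    show (redPowGraph G).Adj ((f u : {x : G // x ≠ 1}) : G) ((f v : {x : G // x ≠ 1}) : G)
    rcases this with h | h
    · exact Or.inl (by rw [hfval u, hfval v]; exact h)
    · exact Or.inr (by rw [hfval u, hfval v]; exact h)
  let fhom : Γ →g (Γ.induce {u | u ≠ x}) := ⟨f, fun h => hfadj _ _ h⟩
  let ι : (Γ.induce {u | u ≠ x}) →g Γ := ⟨Subtype.val, fun h => h⟩
  have hfix : ∀ u : {u : {x : G // x ≠ 1} | u ≠ x}, f (u : {x : G // x ≠ 1}) = u := by
    intro u
    simp only [f, dif_neg u.2]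
  have hinj : Function.Injective (ConnectedComponent.map ι) := by
    intro c d
    refine ConnectedComponent.ind₂ (fun u v h => ?_) c d
    simp only [ConnectedComponent.map_mk] at h
    have hr : Γ.Reachable (ι u) (ι v) := ConnectedComponent.exact h
    have hr2 := hr.map fhom
    have : (Γ.induce {u | u ≠ x}).Reachable u v := by
      have e1 : fhom (ι u) = u := hfix u
      have e2 : fhom (ι v) = v := hfix v
      rwa [e1, e2] at hr2
    exact ConnectedComponent.sound this
  have hfin : Finite Γ.ConnectedComponent :=
    Finite.of_surjective Γ.connectedComponentMk (fun c => Quot.exists_rep c)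
  have hle : Nat.card (Γ.induce {u | u ≠ x}).ConnectedComponent ≤
      Nat.card Γ.ConnectedComponent :=
    Nat.card_le_card_of_injective _ hinj
  exact absurd hx (not_lt.mpr hle)
end

section
/- Let G be a finite cyclic group of order at least 2. Then RP*(G) has a cut vertex if and only if G ≅ ℤ₄. -/
open SimpleGraph

section Aux

open Subgroup

lemma aux_card_cc_edgeless {V : Type*} (Γ : SimpleGraph V) (h : ∀ u v, ¬ Γ.Adj u v) :
    Nat.card Γ.ConnectedComponent = Nat.card V := by
  refine (Nat.card_eq_of_bijective Γ.connectedComponentMk ⟨?_, fun c => c.exists_rep⟩).symm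
  intro a b hab
  obtain ⟨w⟩ := (SimpleGraph.ConnectedComponent.eq.1 hab)
  cases w with
  | nil => rfl
  | cons ha _ => exact absurd ha (h _ _)

lemma aux_card_cc_connected {V : Type*} {Γ : SimpleGraph V} (h : Γ.Connected) :
    Nat.card Γ.ConnectedComponent = 1 := by
  have h1 : Subsingleton Γ.ConnectedComponent :=
    ⟨SimpleGraph.ConnectedComponent.ind₂ fun u v =>
      SimpleGraph.ConnectedComponent.sound (h.preconnected u v)⟩
  have h2 : Nonempty Γ.ConnectedComponent := by
    have := h.nonempty
    exact ⟨Γ.connectedComponentMk (Classical.arbitrary _)⟩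
  exact Nat.card_eq_one_iff_unique.2 ⟨h1, h2⟩

set_option linter.unusedSectionVars false

variable {G : Type*} [Group G] [Fintype G]

lemma aux_adj_gen {g x : G} (hg : zpowers g = ⊤) (hx : zpowers x ≠ ⊤) :
    zpowers x < zpowers g := by
  rw [hg]; exact lt_top_iff_ne_top.2 hx

lemma aux_adj (u v : {x : G // x ≠ 1}) (h : zpowers (u : G) < zpowers (v : G) ∨
    zpowers (v : G) < zpowers (u : G)) : (properRedPowGraph G).Adj u v := h

lemma aux_nongen {x : G} (h : orderOf x < Fintype.card G) : zpowers x ≠ ⊤ := by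
  intro htop
  have h1 := Nat.card_zpowers x
  rw [htop, Nat.card_congr Subgroup.topEquiv.toEquiv, Nat.card_eq_fintype_card] at h1
  omega

lemma aux_gen_all {x : G} (h : ∀ y : G, y ∈ zpowers x) : zpowers x = ⊤ :=
  Subgroup.eq_top_iff' _ |>.2 h

lemma aux_induce_connected (s : Set {x : G // x ≠ 1}) (g0 x0 : {x : G // x ≠ 1})
    (hg0s : g0 ∈ s) (hx0s : x0 ∈ s) (hg0 : zpowers (g0 : G) = ⊤)
    (hx0 : zpowers (x0 : G) ≠ ⊤) :
    ((properRedPowGraph G).induce s).Connected := by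
  rw [SimpleGraph.connected_iff]
  refine ⟨?_, ⟨⟨g0, hg0s⟩⟩⟩
  have key : ∀ u : s, ((properRedPowGraph G).induce s).Reachable u ⟨g0, hg0s⟩ := by
    rintro ⟨u, hus⟩
    by_cases h : zpowers (u : G) = ⊤
    · have h1 : ((properRedPowGraph G).induce s).Adj ⟨u, hus⟩ ⟨x0, hx0s⟩ :=
        Or.inr (aux_adj_gen h hx0)
      have h2 : ((properRedPowGraph G).induce s).Adj ⟨x0, hx0s⟩ ⟨g0, hg0s⟩ :=
        Or.inl (aux_adj_gen hg0 hx0)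
      exact h1.reachable.trans h2.reachable
    · exact (SimpleGraph.Adj.reachable (Or.inl (aux_adj_gen hg0 h)))
  intro u v
  exact (key u).trans (key v).symm

lemma aux_no_cut (hc : IsCyclic G) (h2 : 2 ≤ Fintype.card G) (hn4 : Fintype.card G ≠ 4)
    (v : {x : G // x ≠ 1}) : ¬ IsCutVertex (properRedPowGraph G) v := by
  obtain ⟨g, hg⟩ := hc
  have hgtop : zpowers g = ⊤ := aux_gen_all hg
  have hord : orderOf g = Fintype.card G := by
    rw [orderOf_eq_card_of_forall_mem_zpowers hg, Nat.card_eq_fintype_card]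
  by_cases hp : (Fintype.card G).Prime
  · -- prime order: the graph is edgeless
    have hall : ∀ u : {x : G // x ≠ 1}, zpowers (u : G) = ⊤ := by
      intro u
      have hdvd : orderOf (u : G) ∣ Fintype.card G := orderOf_dvd_card
      rcases (Nat.Prime.eq_one_or_self_of_dvd hp _ hdvd) with h1 | h1
      · exact absurd (orderOf_eq_one_iff.1 h1) u.2
      · exact Subgroup.eq_top_of_card_eq _
          (by rw [Nat.card_zpowers, h1, Nat.card_eq_fintype_card])
    intro hcut
    unfold IsCutVertex at hcut
    rw [aux_card_cc_edgeless _ (fun a b hab => by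
        rcases hab with h | h <;> exact h.ne ((hall _).trans (hall _).symm)),
      aux_card_cc_edgeless _ (fun a b hab => by
        rcases hab with h | h <;> exact h.ne ((hall _).trans (hall _).symm))] at hcut
    have hle : Nat.card ({u | u ≠ v} : Set {x : G // x ≠ 1}) ≤ Nat.card {x : G // x ≠ 1} :=
      Nat.card_le_card_of_injective Subtype.val Subtype.val_injective
    exact absurd hcut (not_lt.2 hle)
  · -- composite order
    have hn1 : Fintype.card G ≠ 1 := by omega
    have hpf : (Fintype.card G).minFac.Prime := Nat.minFac_prime hn1
    have hp2 : 2 ≤ (Fintype.card G).minFac := hpf.two_le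
    obtain ⟨m, hpm⟩ : ∃ m, Fintype.card G = (Fintype.card G).minFac * m :=
      Nat.minFac_dvd (Fintype.card G)
    have hm1 : m ≠ 1 := by
      intro h1
      rw [h1, mul_one] at hpm
      exact hp (by rw [hpm]; exact hpf)
    have hm0 : m ≠ 0 := by
      intro h0
      rw [h0, mul_zero] at hpm
      omega
    have hm2 : m ≠ 2 := by
      intro h2'
      rw [h2'] at hpm
      have hdvd2 : 2 ∣ Fintype.card G := ⟨(Fintype.card G).minFac, by omega⟩
      have := Nat.minFac_le_of_dvd (le_refl 2) hdvd2
      omega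
    have hm3 : 3 ≤ m := by omega
    have hple : (Fintype.card G).minFac * 3 ≤ Fintype.card G := by
      calc (Fintype.card G).minFac * 3 ≤ (Fintype.card G).minFac * m :=
            Nat.mul_le_mul_left _ hm3
        _ = Fintype.card G := hpm.symm
    have hmlt : m < Fintype.card G := by
      rw [hpm]
      exact lt_mul_iff_one_lt_left (by omega) |>.2 hpf.one_lt
    have hn6 : 6 ≤ Fintype.card G := by omega
    -- the element x = g^p is a non-generator
    have hx1 : g ^ (Fintype.card G).minFac ≠ 1 := by
      intro h1
      have := Nat.le_of_dvd (by omega) (hord ▸ orderOf_dvd_iff_pow_eq_one.2 h1)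
      omega
    have hordx : orderOf (g ^ (Fintype.card G).minFac) = m := by
      rw [orderOf_pow, hord, Nat.gcd_eq_right (Nat.minFac_dvd _)]
      exact Nat.div_eq_of_eq_mul_left (by omega) (hpm.trans (Nat.mul_comm _ _))
    have hxng : zpowers (g ^ (Fintype.card G).minFac) ≠ ⊤ :=
      aux_nongen (by rw [hordx]; exact hmlt)
    -- the element y = x^2 is another non-generator
    have hy1 : (g ^ (Fintype.card G).minFac) ^ 2 ≠ 1 := by
      intro h1
      have := Nat.le_of_dvd (by omega) (hordx ▸ orderOf_dvd_iff_pow_eq_one.2 h1)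
      omega
    have hyng : zpowers ((g ^ (Fintype.card G).minFac) ^ 2) ≠ ⊤ := by
      apply aux_nongen
      have hdvd := orderOf_pow_dvd (x := g ^ (Fintype.card G).minFac) 2
      have := Nat.le_of_dvd (by omega) (hordx ▸ hdvd)
      omega
    have hxy : g ^ (Fintype.card G).minFac ≠ (g ^ (Fintype.card G).minFac) ^ 2 := by
      intro h
      rw [pow_two] at h
      exact hx1 (left_eq_mul.1 h)
    -- g and g⁻¹ are two distinct generators
    have hg1 : g ≠ 1 := by
      intro h1
      rw [h1, orderOf_one] at hord
      omega
    have hgi1 : g⁻¹ ≠ 1 := inv_ne_one.2 hg1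
    have hggi : g ≠ g⁻¹ := by
      intro h
      have h2' : g * g = 1 := by nth_rewrite 2 [h]; exact mul_inv_cancel g
      have hsq : g ^ 2 = 1 := by rw [pow_two]; exact h2'
      have := Nat.le_of_dvd (by omega) (hord ▸ orderOf_dvd_iff_pow_eq_one.2 hsq)
      omega
    have hgitop : zpowers g⁻¹ = ⊤ := by rw [zpowers_inv]; exact hgtop
    -- choose a generator and a non-generator avoiding v
    obtain ⟨a, ha1, hatop, hav⟩ : ∃ a : G, a ≠ 1 ∧ zpowers a = ⊤ ∧ a ≠ (v : G) := by
      by_cases h : g = (v : G)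
      · exact ⟨g⁻¹, hgi1, hgitop, fun he => hggi (h.trans he.symm)⟩
      · exact ⟨g, hg1, hgtop, h⟩
    obtain ⟨b, hb1, hbng, hbv⟩ : ∃ b : G, b ≠ 1 ∧ zpowers b ≠ ⊤ ∧ b ≠ (v : G) := by
      by_cases h : g ^ (Fintype.card G).minFac = (v : G)
      · exact ⟨(g ^ (Fintype.card G).minFac) ^ 2, hy1, hyng, fun he => hxy (h.trans he.symm)⟩
      · exact ⟨g ^ (Fintype.card G).minFac, hx1, hxng, h⟩
    intro hcut
    unfold IsCutVertex at hcut
    have hconn : ((properRedPowGraph G).induce {u | u ≠ v}).Connected :=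
      aux_induce_connected {u | u ≠ v} ⟨a, ha1⟩ ⟨b, hb1⟩
        (fun he => hav (congrArg Subtype.val he)) (fun he => hbv (congrArg Subtype.val he))
        hatop hbng
    rw [aux_card_cc_connected hconn] at hcut
    have hne : Nonempty (properRedPowGraph G).ConnectedComponent :=
      ⟨(properRedPowGraph G).connectedComponentMk v⟩
    have hpos : 0 < Nat.card (properRedPowGraph G).ConnectedComponent := Nat.card_pos
    omega

lemma aux_cut_of_four (hc : IsCyclic G) (h4 : Fintype.card G = 4) :
    ∃ v : {x : G // x ≠ 1}, IsCutVertex (properRedPowGraph G) v := by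
  obtain ⟨g, hg⟩ := hc
  have hgtop : zpowers g = ⊤ := aux_gen_all hg
  have hord : orderOf g = 4 := by
    rw [orderOf_eq_card_of_forall_mem_zpowers hg, Nat.card_eq_fintype_card, h4]
  have hpne : ∀ k : ℕ, 0 < k → k < 4 → g ^ k ≠ 1 := by
    intro k hk0 hk4 h1
    have := Nat.le_of_dvd hk0 (hord ▸ orderOf_dvd_iff_pow_eq_one.2 h1)
    omega
  have hg1 : g ≠ 1 := by
    have := hpne 1 one_pos (by norm_num); simpa using this
  have hg2 : g ^ 2 ≠ 1 := hpne 2 (by norm_num) (by norm_num)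
  have hg3 : g ^ 3 ≠ 1 := hpne 3 (by norm_num) (by norm_num)
  have h4e : g ^ 4 = 1 := by rw [← hord]; exact pow_orderOf_eq_one g
  -- classification of non-identity elements
  have hclass : ∀ x : G, x ≠ 1 → x = g ∨ x = g ^ 2 ∨ x = g ^ 3 := by
    intro x hx
    obtain ⟨k, hk⟩ := (Submonoid.mem_powers_iff _ _).1 (mem_powers_iff_mem_zpowers.2 (hg x))
    have hk' : g ^ (k % 4) = x := by rw [← hk, ← hord, pow_mod_orderOf]
    have hlt : k % 4 < 4 := Nat.mod_lt _ (by norm_num)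
    interval_cases h : k % 4
    · rw [pow_zero] at hk'; exact absurd hk'.symm hx
    · rw [pow_one] at hk'; exact Or.inl hk'.symm
    · exact Or.inr (Or.inl hk'.symm)
    · exact Or.inr (Or.inr hk'.symm)
  have hgen3 : zpowers (g ^ 3) = ⊤ := by
    rw [eq_top_iff, ← hgtop, zpowers_le]
    have h9 : (g ^ 3) ^ 3 = g := by
      rw [← pow_mul, show (3 * 3 : ℕ) = 4 + 4 + 1 by norm_num, pow_add, pow_add, h4e,
        one_mul, one_mul, pow_one]
    have hmem : (g ^ 3) ^ 3 ∈ zpowers (g ^ 3) := pow_mem (Subgroup.mem_zpowers (g ^ 3)) 3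
    rwa [h9] at hmem
  have hng2 : zpowers (g ^ 2) ≠ ⊤ := by
    apply aux_nongen
    have hdvd : orderOf (g ^ 2) ∣ 2 := orderOf_dvd_iff_pow_eq_one.2 (by
      rw [← pow_mul]; norm_num; exact h4e)
    have := Nat.le_of_dvd (by norm_num) hdvd
    omega
  -- distinctness
  have hgg2 : g ≠ g ^ 2 := by
    intro h
    rw [pow_two] at h
    exact hg1 (left_eq_mul.1 h)
  have hgg3 : g ≠ g ^ 3 := by
    intro h
    have h' : g ^ 1 = g ^ 3 := by rw [pow_one]; exact h
    rw [pow_inj_mod, hord] at h'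
    omega
  have hg2g3 : g ^ 2 ≠ g ^ 3 := by
    intro h
    rw [pow_inj_mod, hord] at h
    omega
  refine ⟨⟨g ^ 2, hg2⟩, ?_⟩
  unfold IsCutVertex
  -- the whole graph is connected
  have hconn : (properRedPowGraph G).Connected := by
    rw [SimpleGraph.connected_iff]
    refine ⟨?_, ⟨⟨g, hg1⟩⟩⟩
    have key : ∀ u : {x : G // x ≠ 1},
        (properRedPowGraph G).Reachable u ⟨g ^ 2, hg2⟩ := by
      rintro ⟨u, hu⟩
      rcases hclass u hu with rfl | rfl | rfl
      · exact (aux_adj _ _ (Or.inr (aux_adj_gen hgtop hng2))).reachable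
      · exact SimpleGraph.Reachable.refl _
      · exact (aux_adj _ _ (Or.inr (aux_adj_gen hgen3 hng2))).reachable
    exact fun u w => (key u).trans (key w).symm
  -- the graph minus g^2 is edgeless with exactly two vertices
  have hgenrest : ∀ a : {u : {x : G // x ≠ 1} // u ∈
      {u | u ≠ (⟨g ^ 2, hg2⟩ : {x : G // x ≠ 1})}},
      zpowers ((a : {x : G // x ≠ 1}) : G) = ⊤ := by
    rintro ⟨⟨u, hu⟩, hune⟩
    rcases hclass u hu with rfl | h | rfl
    · exact hgtop
    · exact absurd (Subtype.ext h) hune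
    · exact hgen3
  have hedge : ∀ a b : {u : {x : G // x ≠ 1} // u ∈
        {u | u ≠ (⟨g ^ 2, hg2⟩ : {x : G // x ≠ 1})}},
      ¬ ((properRedPowGraph G).induce {u | u ≠ (⟨g ^ 2, hg2⟩ : {x : G // x ≠ 1})}).Adj a b := by
    intro a b hab
    rcases hab with h | h <;> exact h.ne ((hgenrest _).trans (hgenrest _).symm)
  have hcard2 : Nat.card ({u | u ≠ (⟨g ^ 2, hg2⟩ : {x : G // x ≠ 1})} :
      Set {x : G // x ≠ 1}) = 2 := by
    rw [Nat.card_eq_two_iff]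
    refine ⟨⟨⟨g, hg1⟩, fun h => hgg2 (congrArg Subtype.val h)⟩,
      ⟨⟨g ^ 3, hg3⟩, fun h => hg2g3 (congrArg Subtype.val h).symm⟩, ?_, ?_⟩
    · intro h
      rw [Subtype.ext_iff, Subtype.ext_iff] at h
      exact hgg3 h
    · rw [Set.eq_univ_iff_forall]
      rintro ⟨⟨u, hu⟩, hune⟩
      rcases hclass u hu with rfl | h | rfl
      · exact Or.inl rfl
      · exact absurd (Subtype.ext h) hune
      · exact Or.inr rfl
  rw [aux_card_cc_connected hconn, aux_card_cc_edgeless _ hedge, hcard2]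
  norm_num

end Aux

/-- For a finite cyclic group G of order at least 2, RP*(G) has a cut vertex iff
G ≅ ℤ₄. -/
theorem stmt16 {G : Type*} [Group G] [Fintype G] (hc : IsCyclic G)
    (h2 : 2 ≤ Fintype.card G) :
    (∃ v : {x : G // x ≠ 1}, IsCutVertex (properRedPowGraph G) v) ↔
      Nonempty (G ≃* Multiplicative (ZMod 4)) := by
  constructor
  · rintro ⟨v, hv⟩
    by_cases h4 : Fintype.card G = 4
    · have hcard : Nat.card G = Nat.card (Multiplicative (ZMod 4)) := by
        rw [Nat.card_eq_fintype_card, h4, Nat.card_eq_fintype_card,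
          Fintype.card_multiplicative, ZMod.card]
      exact ⟨mulEquivOfCyclicCardEq hcard⟩
    · exact absurd hv (aux_no_cut hc h2 h4 v)
  · rintro ⟨e⟩
    have h4 : Fintype.card G = 4 := by
      rw [Fintype.card_congr e.toEquiv, Fintype.card_multiplicative, ZMod.card]
    exact aux_cut_of_four hc h4
end

section
/- For a prime p and positive integer n, the vertex connectivity of RP(ℤ_{p^n}) equals p^{n−1}, and the vertex connectivity of RP*(ℤ_{p^n}) equals p^{n−1} − 1. -/
open SimpleGraph

/-- The vertex connectivity of a finite graph: the least size of a set of vertices whose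
removal results in a disconnected or trivial (at most one vertex) graph. -/
noncomputable def vertexConnectivity {V : Type*} [Fintype V] (Γ : SimpleGraph V) : ℕ :=
  sInf {n | ∃ S : Finset V, S.card = n ∧
    (¬ (Γ.induce ((↑S : Set V)ᶜ)).Connected ∨ Fintype.card V ≤ S.card + 1)}

lemma not_connected_of_no_adj {W : Type*} (Γ : SimpleGraph W)
    (h : ∀ u v, ¬ Γ.Adj u v) {u v : W} (huv : u ≠ v) : ¬ Γ.Connected := by
  intro hc
  obtain ⟨w⟩ := hc.preconnected u v
  cases w with
  | nil => exact huv rfl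
  | cons ha _ => exact h _ _ ha

/-- Master lemma: if the vertex set splits into `a` "generators" (mutually nonadjacent)
and `b` "non-generators" (each adjacent to every generator), with `b ≤ a`, then the
vertex connectivity equals `b`. -/
lemma master {W : Type*} [Fintype W] (Γ : SimpleGraph W) (P : W → Prop) [DecidablePred P]
    (a b : ℕ)
    (hcard : (Finset.univ.filter P).card = a)
    (hncard : (Finset.univ.filter (fun w => ¬ P w)).card = b)
    (hab : b ≤ a)
    (hind : ∀ u v, P u → P v → ¬ Γ.Adj u v)
    (hadj : ∀ u v, P u → ¬ P v → Γ.Adj u v) :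
    vertexConnectivity Γ = b := by
  classical
  have hW : Fintype.card W = a + b := by
    rw [← hcard, ← hncard, Finset.card_filter_add_card_filter_not, Finset.card_univ]
  set S : Finset W := Finset.univ.filter (fun w => ¬ P w) with hS
  have hmemS : ∀ w : W, w ∈ ((↑S : Set W)ᶜ) ↔ P w := by
    intro w; simp [hS]
  have hmem : b ∈ {m | ∃ S : Finset W, S.card = m ∧
      (¬ (Γ.induce ((↑S : Set W)ᶜ)).Connected ∨ Fintype.card W ≤ S.card + 1)} := by
    refine ⟨S, hncard, ?_⟩
    by_cases ha2 : 2 ≤ a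
    · left
      have h2 : 1 < (Finset.univ.filter P).card := by omega
      obtain ⟨u, hu, v, hv, huv⟩ := Finset.one_lt_card.mp h2
      have hPu : P u := (Finset.mem_filter.mp hu).2
      have hPv : P v := (Finset.mem_filter.mp hv).2
      refine not_connected_of_no_adj _ ?_
        (u := (⟨u, (hmemS u).mpr hPu⟩ : ((↑S : Set W)ᶜ : Set W)))
        (v := ⟨v, (hmemS v).mpr hPv⟩)
        (by simpa [Subtype.ext_iff] using huv)
      rintro ⟨x, hx⟩ ⟨y, hy⟩ hadjxy
      exact hind x y ((hmemS x).mp hx) ((hmemS y).mp hy) hadjxy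
    · right; omega
  refine le_antisymm (Nat.sInf_le hmem) (le_csInf ⟨b, hmem⟩ ?_)
  rintro k ⟨T, hTcard, hT⟩
  by_contra hlt
  push_neg at hlt
  -- hlt : k < b
  have hcardbig : ¬ (Fintype.card W ≤ T.card + 1) := by omega
  have hconnT : ¬ (Γ.induce ((↑T : Set W)ᶜ)).Connected := hT.resolve_right hcardbig
  apply hconnT
  -- find a generator and a non-generator outside T
  have hg : ((Finset.univ.filter P) \ T).Nonempty := by
    rw [← Finset.card_pos]
    have := Finset.le_card_sdiff T (Finset.univ.filter P)
    omega
  have hx : (S \ T).Nonempty := by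
    rw [← Finset.card_pos]
    have := Finset.le_card_sdiff T S
    omega
  obtain ⟨g₀, hg₀⟩ := hg
  obtain ⟨x₀, hx₀⟩ := hx
  rw [Finset.mem_sdiff, Finset.mem_filter] at hg₀
  rw [Finset.mem_sdiff, hS, Finset.mem_filter] at hx₀
  have hPg₀ : P g₀ := hg₀.1.2
  have hPx₀ : ¬ P x₀ := hx₀.1.2
  have hg₀mem : g₀ ∈ ((↑T : Set W)ᶜ) := by simpa using hg₀.2
  have hx₀mem : x₀ ∈ ((↑T : Set W)ᶜ) := by simpa using hx₀.2
  have key : ∀ z : ((↑T : Set W)ᶜ : Set W),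
      (Γ.induce ((↑T : Set W)ᶜ)).Reachable z ⟨g₀, hg₀mem⟩ := by
    rintro ⟨z, hz⟩
    by_cases hzg : z = g₀
    · subst hzg; exact Reachable.refl _
    · by_cases hPz : P z
      · have a1 : (Γ.induce ((↑T : Set W)ᶜ)).Adj ⟨z, hz⟩ ⟨x₀, hx₀mem⟩ :=
          hadj z x₀ hPz hPx₀
        have a2 : (Γ.induce ((↑T : Set W)ᶜ)).Adj ⟨x₀, hx₀mem⟩ ⟨g₀, hg₀mem⟩ :=
          (hadj g₀ x₀ hPg₀ hPx₀).symm
        exact a1.reachable.trans a2.reachable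
      · have a1 : (Γ.induce ((↑T : Set W)ᶜ)).Adj ⟨z, hz⟩ ⟨g₀, hg₀mem⟩ :=
          (hadj g₀ z hPg₀ hPz).symm
        exact a1.reachable
  haveI : Nonempty ((↑T : Set W)ᶜ : Set W) := ⟨⟨g₀, hg₀mem⟩⟩
  exact Connected.mk (fun x y => (key x).trans (key y).symm)

/-- κ(RP(ℤ_{p^n})) = p^{n−1} and κ(RP*(ℤ_{p^n})) = p^{n−1} − 1. -/
theorem stmt17 (p n : ℕ) (hp : p.Prime) (hn : 1 ≤ n) :
    letI : NeZero (p ^ n) := ⟨pow_ne_zero n hp.ne_zero⟩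
    vertexConnectivity (redPowGraph (Multiplicative (ZMod (p ^ n)))) = p ^ (n - 1) ∧
    vertexConnectivity (properRedPowGraph (Multiplicative (ZMod (p ^ n)))) = p ^ (n - 1) - 1 := by
  classical
  haveI : NeZero (p ^ n) := ⟨pow_ne_zero n hp.ne_zero⟩
  set N := p ^ n with hN
  set t := p ^ (n - 1) with ht
  set V := Multiplicative (ZMod N) with hV
  have hpt : t * p = N := by
    rw [ht, hN, ← pow_succ]; congr 1; omega
  have ht1 : 1 ≤ t := Nat.one_le_iff_ne_zero.mpr (pow_ne_zero _ hp.ne_zero)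
  have h2t : 2 * t ≤ N := by
    calc 2 * t ≤ p * t := Nat.mul_le_mul_right t hp.two_le
    _ = N := by rw [mul_comm]; exact hpt
  have hN1 : 1 < N := by omega
  have hcardV : Fintype.card V = N := by simp [hV, ZMod.card]
  have key : ∀ g : V, Subgroup.zpowers g = ⊤ ↔ orderOf g = N := by
    intro g
    constructor
    · intro h
      have := orderOf_eq_card_of_forall_mem_zpowers (g := g)
        (fun x => h ▸ Subgroup.mem_top x)
      simpa [Nat.card_eq_fintype_card, hcardV] using this
    · intro h
      have hcz : Fintype.card (Subgroup.zpowers g) = Fintype.card V := by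
        rw [Fintype.card_zpowers, h, hcardV]
      exact Subgroup.eq_top_of_card_eq _ (by simpa [Nat.card_eq_fintype_card] using hcz)
  have htot : N.totient = N - t := by
    rw [hN, Nat.totient_prime_pow hp (by omega), ← ht, Nat.mul_sub, mul_one, hpt]
  have hA : (Finset.univ.filter fun g : V => Subgroup.zpowers g = ⊤).card = N - t := by
    have : (Finset.univ.filter fun g : V => Subgroup.zpowers g = ⊤)
        = (Finset.univ.filter fun g : V => orderOf g = N) := by
      apply Finset.filter_congr
      intro g _
      simp [key g]
    rw [this, ← htot]
    exact IsCyclic.card_orderOf_eq_totient (by rw [hcardV])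
  have hB : (Finset.univ.filter fun g : V => ¬ Subgroup.zpowers g = ⊤).card = t := by
    rw [Finset.filter_not, Finset.card_sdiff_of_subset (Finset.filter_subset _ _), Finset.card_univ,
      hcardV, hA]
    omega
  -- generators are nonidentity
  haveI : Nontrivial V := by
    apply Fintype.one_lt_card_iff_nontrivial.mp
    omega
  have hne1 : ∀ g : V, Subgroup.zpowers g = ⊤ → g ≠ 1 := by
    intro g hg h1
    rw [h1, Subgroup.zpowers_one_eq_bot] at hg
    exact bot_ne_top hg
  constructor
  · -- RP case
    refine master (redPowGraph V) (fun g => Subgroup.zpowers g = ⊤) (N - t) t hA hB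
      (by omega) ?_ ?_
    · intro u v hu hv hadj
      obtain h | h := hadj
      · rw [hu, hv] at h; exact lt_irrefl _ h
      · rw [hu, hv] at h; exact lt_irrefl _ h
    · intro u v hu hv
      exact Or.inr (hu ▸ lt_top_iff_ne_top.mpr hv)
  · -- RP* case
    have hcardV' : Fintype.card {x : V // x ≠ 1} = N - 1 := by
      rw [Fintype.card_subtype_compl, Fintype.card_subtype_eq, hcardV]
    have hA' : (Finset.univ.filter fun x : {x : V // x ≠ 1} =>
        Subgroup.zpowers (x : V) = ⊤).card = N - t := by
      rw [← hA]
      refine Finset.card_bij (fun a _ => (a : V)) ?_ ?_ ?_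
      · intro a ha
        simp only [Finset.mem_filter, Finset.mem_univ, true_and] at ha ⊢
        exact ha
      · intro a _ b _ h
        exact Subtype.ext h
      · intro g hg
        simp only [Finset.mem_filter, Finset.mem_univ, true_and] at hg
        exact ⟨⟨g, hne1 g hg⟩, by simp [hg], rfl⟩
    have hB' : (Finset.univ.filter fun x : {x : V // x ≠ 1} =>
        ¬ Subgroup.zpowers (x : V) = ⊤).card = t - 1 := by
      rw [Finset.filter_not, Finset.card_sdiff_of_subset (Finset.filter_subset _ _), Finset.card_univ,
        hcardV', hA']
      omega
    refine master (properRedPowGraph V) (fun x => Subgroup.zpowers (x : V) = ⊤) (N - t) (t - 1)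
      hA' hB' (by omega) ?_ ?_
    · intro u v hu hv hadj
      obtain h | h := hadj
      · rw [hu, hv] at h; exact lt_irrefl _ h
      · rw [hu, hv] at h; exact lt_irrefl _ h
    · intro u v hu hv
      exact Or.inr (hu ▸ lt_top_iff_ne_top.mpr hv)
end

section
/- For a prime p and n ≥ 1, the graph RP(ℤ_{p^n}) is Hamiltonian if and only if p = 2 and n ≥ 2. Moreover, RP*(ℤ_{p^n}) is never Hamiltonian. -/
open SimpleGraph

/-- A graph is Hamiltonian if it contains a cycle passing through every vertex exactly once. -/
def IsHamiltonian' {V : Type*} [DecidableEq V] (Γ : SimpleGraph V) : Prop :=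
  ∃ (a : V) (c : Γ.Walk a a), c.IsHamiltonianCycle

namespace Stmt18Aux

open Multiplicative List

/-! ### An independent set in a Hamiltonian graph has at most half the vertices. -/

theorem indep_bound {V : Type*} [DecidableEq V] [Fintype V] {G : SimpleGraph V} {a : V}
    {c : G.Walk a a} (hc : c.IsHamiltonianCycle) (A : Finset V)
    (hA : ∀ u ∈ A, ∀ v ∈ A, ¬ G.Adj u v) : 2 * A.card ≤ Fintype.card V := by
  classical
  have hnil : ¬ c.Nil := hc.isCycle.not_nil
  set T : List V := c.support.tail with hTdef
  have hcount : ∀ v, T.count v = 1 := by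
    intro v
    have h2 := hc.isHamiltonian_tail v
    rwa [Walk.support_tail_of_not_nil c hnil] at h2
  have hmemT : ∀ v, v ∈ T := fun v =>
    List.count_pos_iff.mp (by rw [hcount v]; norm_num)
  have hnodupT : T.Nodup := List.nodup_iff_count_le_one.mpr fun v => (hcount v).le
  have hlenT : T.length = Fintype.card V := by
    rw [← List.toFinset_card_of_nodup hnodupT]
    have : T.toFinset = Finset.univ := Finset.eq_univ_iff_forall.mpr fun v =>
      List.mem_toFinset.mpr (hmemT v)
    rw [this, Finset.card_univ]
  have hm3 : 3 ≤ T.length := by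
    have h1 := c.length_support
    have h2 : c.support.length = T.length + 1 := by
      rw [c.support_eq_cons]; simp [hTdef]
    have := hc.isCycle.three_le_length
    omega
  set m : ℕ := T.length with hm
  have hm0 : 0 < m := by omega
  have hsupp : c.support = a :: T := c.support_eq_cons
  have hTne : T ≠ [] := List.length_pos_iff.mp (by omega)
  have hchainT : List.Chain G.Adj a T := by
    have h := c.isChain_adj_support
    rw [hsupp] at h
    exact h
  obtain ⟨hhead, hstep⟩ : (∀ h : 0 < T.length, G.Adj a (T.get ⟨0, h⟩)) ∧
      ∀ (i : ℕ) (h : i < T.length - 1), G.Adj (T.get ⟨i, by omega⟩) (T.get ⟨i + 1, by omega⟩) := by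
    have := List.isChain_iff_getElem.mp hchainT
    exact ⟨fun h => this 0 (by simp; omega),
      fun i h => this (i + 1) (by simp; omega)⟩
  have hlast : T.get ⟨m - 1, by omega⟩ = a := by
    have h1 : c.support.getLast? = some a := by
      rw [List.getLast?_eq_getLast_of_ne_nil (c.support_ne_nil), c.getLast_support]
    rw [hsupp] at h1
    rw [List.getLast?_eq_getLast_of_ne_nil (List.cons_ne_nil a T)] at h1
    have h2 : (a :: T).getLast (List.cons_ne_nil a T) = a := Option.some.inj h1
    rw [List.getLast_cons hTne] at h2
    rw [List.getLast_eq_getElem] at h2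
    simpa [List.get_eq_getElem, hm] using h2
  have hadj : ∀ (i : ℕ) (h : i < m),
      G.Adj (T.get ⟨i, h⟩) (T.get ⟨(i + 1) % m, Nat.mod_lt _ hm0⟩) := by
    intro i h
    rcases eq_or_lt_of_le (Nat.succ_le_of_lt h) with heq | hlt
    · have hmod : (i + 1) % m = 0 := by
        have hh : i + 1 = m := by omega
        rw [hh]; exact Nat.mod_self m
      have e1 : T.get ⟨i, h⟩ = a := by
        have hieq : i = m - 1 := by omega
        subst hieq; exact hlast
      rw [e1]
      have e2 : T.get ⟨(i + 1) % m, Nat.mod_lt _ hm0⟩ = T.get ⟨0, by omega⟩ := by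
        congr 1; exact Fin.ext (by simp [hmod])
      rw [e2]
      exact hhead (by omega)
    · have hmod : (i + 1) % m = i + 1 := Nat.mod_eq_of_lt hlt
      have e2 : T.get ⟨(i + 1) % m, Nat.mod_lt _ hm0⟩ = T.get ⟨i + 1, by omega⟩ := by
        congr 1; exact Fin.ext (by simp [hmod])
      rw [e2]
      exact hstep i (by omega)
  -- the finset of positions in A
  set S : Finset (Fin m) := Finset.univ.filter (fun i => T.get i ∈ A) with hS
  set Sc : Finset (Fin m) := Finset.univ.filter (fun i => T.get i ∉ A) with hSc
  have hmodinj : ∀ x y : ℕ, x < m → y < m → (x + 1) % m = (y + 1) % m → x = y := by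
    intro x y hx hy h
    have ex : (x + 1) % m = if x + 1 = m then 0 else x + 1 := by
      split_ifs with hxx
      · rw [hxx, Nat.mod_self]
      · exact Nat.mod_eq_of_lt (by omega)
    have ey : (y + 1) % m = if y + 1 = m then 0 else y + 1 := by
      split_ifs with hyy
      · rw [hyy, Nat.mod_self]
      · exact Nat.mod_eq_of_lt (by omega)
    rw [ex, ey] at h
    split_ifs at h <;> omega
  have hcard1 : S.card ≤ Sc.card := by
    apply Finset.card_le_card_of_injOn (fun i => ⟨(i.val + 1) % m, Nat.mod_lt _ hm0⟩)
    · intro i hi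
      rw [hS, Finset.mem_coe, Finset.mem_filter] at hi
      rw [hSc, Finset.mem_coe, Finset.mem_filter]
      refine ⟨Finset.mem_univ _, ?_⟩
      intro hmem
      exact hA _ hi.2 _ hmem (hadj i.val i.isLt)
    · intro i _ j _ hij
      have := congrArg Fin.val hij
      simp only at this
      exact Fin.ext (hmodinj i.val j.val i.isLt j.isLt this)
  have hcard2 : S.card + Sc.card = m := by
    have := Finset.card_filter_add_card_filter_not
      (s := (Finset.univ : Finset (Fin m))) (p := fun i => T.get i ∈ A)
    rw [← hS, ← hSc] at this
    rwa [Finset.card_univ, Fintype.card_fin] at this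
  have hcard3 : S.card = A.card := by
    refine Finset.card_bij (fun i _ => T.get i) ?_ ?_ ?_
    · intro i hi
      exact (Finset.mem_filter.mp hi).2
    · intro i hi j hj hij
      exact List.nodup_iff_injective_get.mp hnodupT hij
    · intro b hb
      obtain ⟨i, hi⟩ := List.mem_iff_get.mp (hmemT b)
      refine ⟨i, Finset.mem_filter.mpr ⟨Finset.mem_univ _, ?_⟩, hi⟩
      rw [hi]; exact hb
  omega

/-! ### Building a Hamiltonian cycle from a cyclic enumeration -/

variable {V : Type*}

/-- A walk along `f k, f (k+1), ..., f (k+d)`. -/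
def buildWalk (G : SimpleGraph V) (f : ℕ → V) (hadj : ∀ i, G.Adj (f i) (f (i + 1))) :
    (d k : ℕ) → G.Walk (f k) (f (k + d))
  | 0, k => (Walk.nil : G.Walk (f k) (f k)).copy rfl (by rw [Nat.add_zero])
  | (d + 1), k =>
    Walk.cons (hadj k) ((buildWalk G f hadj d (k + 1)).copy rfl (by congr 1; omega))

lemma support_buildWalk (G : SimpleGraph V) (f : ℕ → V)
    (hadj : ∀ i, G.Adj (f i) (f (i + 1))) :
    ∀ d k, (buildWalk G f hadj d k).support = (List.range' k (d + 1)).map f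
  | 0, k => by simp [buildWalk]
  | (d + 1), k => by
    rw [buildWalk]
    rw [List.range'_succ]
    simp [support_buildWalk G f hadj d (k + 1)]

lemma edges_buildWalk (G : SimpleGraph V) (f : ℕ → V)
    (hadj : ∀ i, G.Adj (f i) (f (i + 1))) :
    ∀ d k, (buildWalk G f hadj d k).edges = (List.range' k d).map (fun i => s(f i, f (i + 1)))
  | 0, k => by simp [buildWalk]
  | (d + 1), k => by
    rw [buildWalk]
    rw [List.range'_succ]
    simp [edges_buildWalk G f hadj d (k + 1)]

theorem isHamiltonian_of_cyclic [DecidableEq V] (G : SimpleGraph V) (N : ℕ)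
    (hN : 3 ≤ N) (f : ℕ → V) (hadj : ∀ i, G.Adj (f i) (f (i + 1)))
    (hinj : ∀ i j, 1 ≤ i → i ≤ N → 1 ≤ j → j ≤ N → f i = f j → i = j)
    (hf0 : f N = f 0)
    (hsurj : ∀ v, ∃ i, 1 ≤ i ∧ i ≤ N ∧ f i = v) :
    IsHamiltonian' G := by
  classical
  refine ⟨f 0, (buildWalk G f hadj N 0).copy rfl (by rw [Nat.zero_add, hf0]), ?_⟩
  set c : G.Walk (f 0) (f 0) := (buildWalk G f hadj N 0).copy rfl (by rw [Nat.zero_add, hf0])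
    with hc
  have hsupp : c.support = (List.range' 0 (N + 1)).map f := by
    rw [hc, Walk.support_copy, support_buildWalk]
  have hsupp' : c.support = f 0 :: (List.range' 1 N).map f := by
    rw [hsupp, List.range'_succ, List.map_cons]
  have htail : c.support.tail = (List.range' 1 N).map f := by rw [hsupp']; rfl
  have hedges : c.edges = (List.range' 0 N).map (fun i => s(f i, f (i + 1))) := by
    rw [hc, Walk.edges_copy, edges_buildWalk]
  have hlength : c.length = N := by
    have h1 := c.length_support
    rw [hsupp] at h1
    simp at h1
    omega
  have htailnodup : c.support.tail.Nodup := by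
    rw [htail]
    apply List.Nodup.map_on _ (List.nodup_range')
    intro x hx y hy hxy
    rw [List.mem_range'_1] at hx hy
    exact hinj x y (by omega) (by omega) (by omega) (by omega) hxy
  rw [Walk.isHamiltonianCycle_iff_isCycle_and_support_count_tail_eq_one]
  constructor
  · rw [Walk.isCycle_def]
    refine ⟨?_, ?_, htailnodup⟩
    · rw [Walk.isTrail_def, hedges]
      apply List.Nodup.map_on _ (List.nodup_range')
      intro x hx y hy hxy
      rw [List.mem_range'_1] at hx hy
      rw [Sym2.eq_iff] at hxy
      rcases hxy with ⟨h1, h2⟩ | ⟨h1, h2⟩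
      · -- f x = f y, f (x+1) = f (y+1)
        have := hinj (x + 1) (y + 1) (by omega) (by omega) (by omega) (by omega) h2
        omega
      · -- f x = f (y+1), f (x+1) = f y
        rcases Nat.eq_zero_or_pos x with hx0 | hx0
        · subst hx0
          have e1 : f N = f (y + 1) := by rw [hf0]; exact h1
          have e2 : N = y + 1 := hinj N (y + 1) (by omega) (le_refl _) (by omega) (by omega) e1
          rcases Nat.eq_zero_or_pos y with hy0 | hy0
          · omega
          · have := hinj 1 y (by omega) (by omega) (by omega) (by omega) h2
            omega
        · have e1 := hinj x (y + 1) (by omega) (by omega) (by omega) (by omega) h1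
          rcases Nat.eq_zero_or_pos y with hy0 | hy0
          · subst hy0
            have e2 : f (x + 1) = f N := by rw [hf0]; exact h2
            have := hinj (x + 1) N (by omega) (by omega) (by omega) (le_refl _) e2
            omega
          · have := hinj (x + 1) y (by omega) (by omega) (by omega) (by omega) h2
            omega
    · intro hnil
      have := congrArg Walk.length hnil
      rw [hlength] at this
      simp at this
      omega
  · intro v
    have hle : c.support.tail.count v ≤ 1 := List.nodup_iff_count_le_one.mp htailnodup v
    have hmem : v ∈ c.support.tail := by
      rw [htail]
      obtain ⟨i, hi1, hi2, hi3⟩ := hsurj v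
      exact List.mem_map.mpr ⟨i, List.mem_range'_1.mpr ⟨hi1, by omega⟩, hi3⟩
    have := List.count_pos_iff.mpr hmem
    omega

/-! ### Subgroup facts in `Multiplicative (ZMod M)` -/

lemma zpowers_ofAdd_eq_top {M : ℕ} [NeZero M] {y : ZMod M} (hy : IsUnit y) :
    Subgroup.zpowers (ofAdd y) = ⊤ := by
  obtain ⟨u, rfl⟩ := hy
  rw [Subgroup.eq_top_iff']
  intro z
  rw [Subgroup.mem_zpowers_iff]
  refine ⟨(((toAdd z) * ↑u⁻¹).val : ℤ), ?_⟩
  rw [← ofAdd_zsmul]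
  have h1 : ((((toAdd z) * ↑u⁻¹).val : ℤ)) • ((u : ZMod M))
      = (((toAdd z) * ↑u⁻¹).val : ZMod M) * (u : ZMod M) := by
    rw [zsmul_eq_mul]
    push_cast
    ring
  rw [h1, ZMod.natCast_val, ZMod.cast_id, mul_assoc, Units.inv_mul, mul_one, ofAdd_toAdd]

lemma not_mem_zpowers {M : ℕ} (h2 : (2 : ℕ) ∣ M) {x : ZMod M}
    (hx : ZMod.castHom h2 (ZMod 2) x = 0) :
    ofAdd (1 : ZMod M) ∉ Subgroup.zpowers (ofAdd x) := by
  rw [Subgroup.mem_zpowers_iff]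
  rintro ⟨k, hk⟩
  rw [← ofAdd_zsmul] at hk
  have hxx : k • x = (1 : ZMod M) := ofAdd.injective hk
  have := congrArg (ZMod.castHom h2 (ZMod 2)) hxx
  rw [map_zsmul, hx, smul_zero, map_one] at this
  exact zero_ne_one this

lemma adj_of_unit {M : ℕ} [NeZero M] (h2 : (2 : ℕ) ∣ M) {x y : ZMod M}
    (hx : ZMod.castHom h2 (ZMod 2) x = 0) (hy : IsUnit y) :
    (redPowGraph (Multiplicative (ZMod M))).Adj (ofAdd x) (ofAdd y) := by
  show Subgroup.zpowers (ofAdd x) < Subgroup.zpowers (ofAdd y) ∨ _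
  refine Or.inl ?_
  rw [zpowers_ofAdd_eq_top hy, lt_top_iff_ne_top]
  intro htop
  exact not_mem_zpowers h2 hx (htop ▸ Subgroup.mem_top _)

lemma not_adj_units {M : ℕ} [NeZero M] {z w : Multiplicative (ZMod M)}
    (hz : IsUnit (toAdd z)) (hw : IsUnit (toAdd w)) :
    ¬ (redPowGraph (Multiplicative (ZMod M))).Adj z w := by
  intro h
  have e1 : Subgroup.zpowers z = ⊤ := by
    have := zpowers_ofAdd_eq_top hz
    rwa [ofAdd_toAdd] at this
  have e2 : Subgroup.zpowers w = ⊤ := by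
    have := zpowers_ofAdd_eq_top hw
    rwa [ofAdd_toAdd] at this
  change Subgroup.zpowers z < Subgroup.zpowers w ∨ Subgroup.zpowers w < Subgroup.zpowers z at h
  rcases h with h | h <;> rw [e1, e2] at h <;> exact lt_irrefl _ h

/-- The units equiv the subtype of elements that are units. -/
noncomputable def unitsEquivIsUnit (α : Type*) [Monoid α] : αˣ ≃ {x : α // IsUnit x} where
  toFun u := ⟨u, u.isUnit⟩
  invFun x := x.2.unit
  left_inv u := Units.ext u.isUnit.unit_spec
  right_inv x := Subtype.ext x.2.unit_spec

lemma card_filter_isUnit (M : ℕ) [NeZero M] :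
    (Finset.univ.filter fun z : Multiplicative (ZMod M) => IsUnit (toAdd z)).card
      = Nat.totient M := by
  classical
  rw [← Fintype.card_subtype]
  have e : {z : Multiplicative (ZMod M) // IsUnit (toAdd z)} ≃ (ZMod M)ˣ :=
    (Equiv.subtypeEquiv (Multiplicative.toAdd) (fun z => Iff.rfl)).trans
      (unitsEquivIsUnit (ZMod M)).symm
  rw [Fintype.card_congr e, ZMod.card_units_eq_totient]

end Stmt18Aux

open Stmt18Aux Multiplicative

/-- RP(ℤ_{p^n}) is Hamiltonian iff p = 2 and n ≥ 2; RP*(ℤ_{p^n}) is never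
Hamiltonian. -/
theorem stmt18 (p n : ℕ) (hp : p.Prime) (hn : 1 ≤ n) :
    (IsHamiltonian' (redPowGraph (Multiplicative (ZMod (p ^ n)))) ↔ (p = 2 ∧ 2 ≤ n)) ∧
    ¬ IsHamiltonian' (properRedPowGraph (Multiplicative (ZMod (p ^ n)))) := by
  classical
  have hM0 : 0 < p ^ n := Nat.pow_pos hp.pos
  haveI : NeZero (p ^ n) := ⟨by omega⟩
  have hM2 : 2 ≤ p ^ n := by
    calc 2 ≤ p := hp.two_le
    _ = p ^ 1 := (pow_one p).symm
    _ ≤ p ^ n := Nat.pow_le_pow_right hp.pos hn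
  have hcardV : Fintype.card (Multiplicative (ZMod (p ^ n))) = p ^ n := by
    rw [Fintype.card_multiplicative, ZMod.card]
  have htot : Nat.totient (p ^ n) = p ^ (n - 1) * (p - 1) := by
    have := Nat.totient_prime_pow hp (show 0 < n by omega)
    simpa using this
  have hq1 : 1 ≤ p ^ (n - 1) := Nat.one_le_pow _ _ hp.pos
  have hpn_eq : p ^ n = p ^ (n - 1) * p := by
    rw [← pow_succ]
    congr 1
    omega
  constructor
  · constructor
    · -- Hamiltonian → p = 2 ∧ 2 ≤ n
      rintro ⟨a, c, hc⟩
      -- independent set of units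
      set A : Finset (Multiplicative (ZMod (p ^ n))) :=
        Finset.univ.filter (fun z => IsUnit (toAdd z)) with hA
      have hbound := indep_bound hc A (fun u hu v hv =>
        not_adj_units (Finset.mem_filter.mp hu).2 (Finset.mem_filter.mp hv).2)
      rw [hcardV, hA, card_filter_isUnit, htot] at hbound
      have hp2 : p = 2 := by
        by_contra hne
        have hp3 : 3 ≤ p := by
          have := hp.two_le
          omega
        rw [hpn_eq] at hbound
        have h1 : p ^ (n - 1) * (p + 1) ≤ 2 * (p ^ (n - 1) * (p - 1)) := by
          have hpp : p + 1 ≤ 2 * (p - 1) := by omega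
          calc p ^ (n - 1) * (p + 1) ≤ p ^ (n - 1) * (2 * (p - 1)) :=
                Nat.mul_le_mul_left _ hpp
          _ = 2 * (p ^ (n - 1) * (p - 1)) := by ring
        have h2 : p ^ (n - 1) * (p + 1) = p ^ (n - 1) * p + p ^ (n - 1) := by ring
        linarith
      have hn2 : 2 ≤ n := by
        have hlen := hc.length_eq
        have h3 := hc.isCycle.three_le_length
        rw [hcardV] at hlen
        have h4 : 3 ≤ p ^ n := by omega
        by_contra hcon
        have hneq : n = 1 := by omega
        rw [hp2, hneq, pow_one] at h4
        omega
      exact ⟨hp2, hn2⟩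
    · -- p = 2 ∧ 2 ≤ n → Hamiltonian
      rintro ⟨hp2, hn2⟩
      subst hp2
      set M : ℕ := 2 ^ n with hMdef
      haveI : NeZero M := ⟨by positivity⟩
      have hM4 : 4 ≤ M := by
        calc (4 : ℕ) = 2 ^ 2 := rfl
        _ ≤ 2 ^ n := Nat.pow_le_pow_right (by omega) hn2
      have h2M : (2 : ℕ) ∣ M := dvd_pow_self 2 (by omega)
      set f : ℕ → Multiplicative (ZMod M) := fun i => ofAdd ((i : ZMod M)) with hf
      apply isHamiltonian_of_cyclic _ M (by omega) f
      · -- adjacency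
        intro i
        have hcast : ∀ j : ℕ, ZMod.castHom h2M (ZMod 2) ((j : ZMod M)) = (j : ZMod 2) := by
          intro j; rw [map_natCast]
        rcases Nat.even_or_odd i with hev | hod
        · have hx : ZMod.castHom h2M (ZMod 2) ((i : ZMod M)) = 0 := by
            rw [hcast, ZMod.natCast_eq_zero_iff]
            exact hev.two_dvd
          have hy : IsUnit (((i + 1 : ℕ) : ZMod M)) := by
            rw [ZMod.isUnit_iff_coprime]
            apply Nat.Coprime.pow_right
            rw [Nat.coprime_comm, Nat.Prime.coprime_iff_not_dvd Nat.prime_two]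
            rw [Nat.even_iff] at hev
            omega
          exact adj_of_unit h2M hx hy
        · have hx : ZMod.castHom h2M (ZMod 2) (((i + 1 : ℕ) : ZMod M)) = 0 := by
            rw [hcast, ZMod.natCast_eq_zero_iff]
            rw [Nat.odd_iff] at hod
            omega
          have hy : IsUnit ((i : ZMod M)) := by
            rw [ZMod.isUnit_iff_coprime]
            apply Nat.Coprime.pow_right
            rw [Nat.coprime_comm, Nat.Prime.coprime_iff_not_dvd Nat.prime_two]
            rw [Nat.odd_iff] at hod
            omega
          exact (adj_of_unit h2M hx hy).symm
      · -- injectivity on [1, M]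
        intro i j hi1 hiM hj1 hjM hij
        have hij' : ((i : ZMod M)) = ((j : ZMod M)) := ofAdd.injective hij
        rw [ZMod.natCast_eq_natCast_iff] at hij'
        have hmod : i % M = j % M := hij'
        have ei : i % M = if i = M then 0 else i := by
          split_ifs with h
          · rw [h, Nat.mod_self]
          · exact Nat.mod_eq_of_lt (by omega)
        have ej : j % M = if j = M then 0 else j := by
          split_ifs with h
          · rw [h, Nat.mod_self]
          · exact Nat.mod_eq_of_lt (by omega)
        rw [ei, ej] at hmod
        split_ifs at hmod <;> omega
      · -- f M = f 0
        show ofAdd ((M : ZMod M)) = ofAdd ((0 : ℕ) : ZMod M)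
        rw [ZMod.natCast_self, Nat.cast_zero]
      · -- surjectivity
        intro v
        set x : ZMod M := toAdd v with hx
        by_cases hx0 : x = 0
        · refine ⟨M, by omega, le_refl _, ?_⟩
          show ofAdd ((M : ZMod M)) = v
          rw [ZMod.natCast_self, ← hx0, hx, ofAdd_toAdd]
        · refine ⟨x.val, ?_, ?_, ?_⟩
          · exact ZMod.val_pos.mpr hx0
          · exact le_of_lt (ZMod.val_lt x)
          · show ofAdd ((x.val : ZMod M)) = v
            rw [ZMod.natCast_val, ZMod.cast_id, hx, ofAdd_toAdd]
  · -- RP* never Hamiltonian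
    rintro ⟨a, c, hc⟩
    haveI : Fact (1 < p ^ n) := ⟨by omega⟩
    set A' : Finset {x : Multiplicative (ZMod (p ^ n)) // x ≠ 1} :=
      Finset.univ.filter (fun z => IsUnit (toAdd z.val)) with hA'
    have hbound := indep_bound hc A' (fun u hu v hv h =>
      not_adj_units (Finset.mem_filter.mp hu).2 (Finset.mem_filter.mp hv).2 h)
    have hcard' : Fintype.card {x : Multiplicative (ZMod (p ^ n)) // x ≠ 1} = p ^ n - 1 := by
      rw [Fintype.card_subtype_compl, hcardV, Fintype.card_subtype_eq]
    have hAcard : A'.card = Nat.totient (p ^ n) := by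
      rw [← card_filter_isUnit (p ^ n)]
      apply Finset.card_bij (fun z _ => z.val)
      · intro z hz
        rw [hA', Finset.mem_filter] at hz
        exact Finset.mem_filter.mpr ⟨Finset.mem_univ _, hz.2⟩
      · intro z hz w hw hzw
        exact Subtype.ext hzw
      · intro b hb
        rw [Finset.mem_filter] at hb
        have hb1 : b ≠ 1 := by
          intro hbe
          rw [hbe] at hb
          have : IsUnit ((0 : ZMod (p ^ n))) := hb.2
          rw [isUnit_zero_iff] at this
          exact zero_ne_one this
        exact ⟨⟨b, hb1⟩, Finset.mem_filter.mpr ⟨Finset.mem_univ _, hb.2⟩, rfl⟩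
    rw [hcard', hAcard, htot, hpn_eq] at hbound
    have hp2 : 2 ≤ p := hp.two_le
    have h1 : p ^ (n - 1) * p ≤ 2 * (p ^ (n - 1) * (p - 1)) := by
      have hpp : p ≤ 2 * (p - 1) := by omega
      calc p ^ (n - 1) * p ≤ p ^ (n - 1) * (2 * (p - 1)) := Nat.mul_le_mul_left _ hpp
      _ = 2 * (p ^ (n - 1) * (p - 1)) := by ring
    have h3 : 0 < p ^ (n - 1) * p := Nat.mul_pos (by omega) hp.pos
    have h4 : p ^ (n - 1) * p ≤ p ^ (n - 1) * p - 1 := le_trans h1 hbound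
    have h5 : p ^ (n - 1) * p - 1 < p ^ (n - 1) * p := Nat.sub_lt h3 one_pos
    exact absurd (lt_of_le_of_lt h4 h5) (lt_irrefl _)
end
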